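/- Let k > 0 and let g : ℝ → ℝ be a function with g(t)² ≤ c for all t ≥ 0, where c < k is a constant. Then there is no differentiable function λ : ℝ → ℝ satisfying the weighted scalar Riccati equation λ'(t) + λ(t)² + 2g(t)·λ(t) + k = 0 for all t ∈ [0, ∞); that is, every solution blows up in finite time. -/

import Mathlib

open Real

/-- For `k > 0` and `g : ℝ → ℝ` with `g(t)² ≤ c < k` for all `t ≥ 0`, there is no
differentiable `λ : ℝ → ℝ` satisfying the weighted scalar Riccati equation
`λ'(t) + λ(t)² + 2g(t)λ(t) + k = 0` on `[0, ∞)`: every solution blows up in finite time. -/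
theorem stmt_15 (k c : ℝ) (hk : 0 < k) (hc : c < k)
    (g : ℝ → ℝ) (hg : ∀ t : ℝ, 0 ≤ t → g t ^ 2 ≤ c) :
    ¬ ∃ lam lam' : ℝ → ℝ,
      (∀ t ∈ Set.Ici (0 : ℝ), HasDerivAt lam (lam' t) t) ∧
      (∀ t ∈ Set.Ici (0 : ℝ), lam' t + lam t ^ 2 + 2 * g t * lam t + k = 0) := by
  rintro ⟨lam, lam', hd, he⟩
  have hc0 : 0 ≤ c := le_trans (sq_nonneg (g 0)) (hg 0 le_rfl)
  set s := Real.sqrt c with hs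
  have hs0 : 0 ≤ s := Real.sqrt_nonneg c
  have hs2 : s ^ 2 = c := Real.sq_sqrt hc0
  set ε := k - c with hε
  have hεpos : 0 < ε := sub_pos.mpr hc
  have hgle : ∀ t, 0 ≤ t → g t ≤ s := by
    intro t ht
    nlinarith [hg t ht, sq_nonneg (g t - s), sq_nonneg (g t + s)]
  have hd' : ∀ t, 0 ≤ t → lam' t ≤ -ε := by
    intro t ht
    have h1 := he t ht
    have h2 := hg t ht
    nlinarith [sq_nonneg (lam t + g t)]
  -- lam t + ε t is antitone on [0, ∞)
  have hmono : AntitoneOn (fun t => lam t + ε * t) (Set.Ici (0:ℝ)) := by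
    apply antitoneOn_of_deriv_nonpos (convex_Ici 0)
    · intro t ht
      exact ((hd t ht).add ((hasDerivAt_id t).const_mul ε)).continuousAt.continuousWithinAt
    · intro t ht
      rw [interior_Ici] at ht
      exact ((hd t (Set.mem_Ici.mpr ht.le)).add ((hasDerivAt_id t).const_mul ε)).differentiableAt.differentiableWithinAt
    · intro t ht
      rw [interior_Ici] at ht
      have H : HasDerivAt (fun t => lam t + ε * t) (lam' t + ε * 1) t := by
        exact (hd t (Set.mem_Ici.mpr ht.le)).add ((hasDerivAt_id' t).const_mul ε)
      rw [H.deriv]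
      have := hd' t ht.le
      nlinarith
  set t₀ : ℝ := max 0 ((lam 0 + s + 1) / ε) with ht₀def
  have ht₀0 : (0:ℝ) ≤ t₀ := le_max_left _ _
  have hεt₀ : lam 0 + s + 1 ≤ ε * t₀ := by
    have h1 : (lam 0 + s + 1) / ε ≤ t₀ := le_max_right _ _
    calc lam 0 + s + 1 = ε * ((lam 0 + s + 1) / ε) := by field_simp
      _ ≤ ε * t₀ := by nlinarith
  have hlamle : ∀ t, t₀ ≤ t → lam t ≤ -s - 1 := by
    intro t ht
    have h1 : lam t + ε * t ≤ lam 0 + ε * 0 :=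
      hmono (Set.mem_Ici.mpr le_rfl) (Set.mem_Ici.mpr (le_trans ht₀0 ht)) (le_trans ht₀0 ht)
    have h2 : ε * t₀ ≤ ε * t := by nlinarith
    nlinarith
  have hne : ∀ t, t₀ ≤ t → lam t + s ≠ 0 := by
    intro t ht
    have := hlamle t ht
    intro h; nlinarith
  -- (lam t + s)⁻¹ - t is monotone on [t₀, ∞)
  have hw : ∀ t ∈ Set.Ici t₀, HasDerivAt (fun t => (lam t + s)⁻¹ - t)
      (-lam' t / (lam t + s) ^ 2 - 1) t := by
    intro t ht
    have h1 : HasDerivAt (fun t => lam t + s) (lam' t) t :=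
      (hd t (le_trans ht₀0 ht)).add_const s
    exact (h1.inv (hne t ht)).sub (hasDerivAt_id' t)
  have hwmono : MonotoneOn (fun t => (lam t + s)⁻¹ - t) (Set.Ici t₀) := by
    apply monotoneOn_of_deriv_nonneg (convex_Ici t₀)
    · intro t ht; exact (hw t ht).continuousAt.continuousWithinAt
    · intro t ht
      rw [interior_Ici] at ht
      exact (hw t (Set.mem_Ici.mpr ht.le)).differentiableAt.differentiableWithinAt
    · intro t ht
      rw [interior_Ici] at ht
      rw [(hw t (Set.mem_Ici.mpr ht.le)).deriv]
      have hle := hlamle t ht.le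
      have hgl := hgle t (le_trans ht₀0 ht.le)
      have heq := he t (le_trans ht₀0 ht.le)
      have hsq : -lam' t ≥ (lam t + s) ^ 2 := by nlinarith
      have hpos : (0:ℝ) < (lam t + s) ^ 2 := by
        have := hne t ht.le; positivity
      have : (1:ℝ) ≤ -lam' t / (lam t + s) ^ 2 := (one_le_div hpos).mpr hsq
      linarith
  have key := hwmono (Set.mem_Ici.mpr le_rfl) (Set.mem_Ici.mpr (by linarith : t₀ ≤ t₀ + 2))
    (by linarith : t₀ ≤ t₀ + 2)
  simp only at key
  -- bounds on the inverses
  have hA : -1 ≤ (lam t₀ + s)⁻¹ := by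
    have h1 : lam t₀ + s ≤ -1 := by have := hlamle t₀ le_rfl; linarith
    have h2 := mul_inv_cancel₀ (hne t₀ le_rfl)
    nlinarith
  have hB : (lam (t₀ + 2) + s)⁻¹ < 0 := by
    apply inv_lt_zero.mpr
    have := hlamle (t₀ + 2) (by linarith)
    linarith
  linarith
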